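/- arXiv:1501.04985 — 3 statements merged into one kernel-verified Lean document; each statement's English description precedes it below -/
import Mathlib

section
/- For every x in [0, π], there exists a unique z in [0, 2] such that z = 2·sin(x − z/2). -/
open Real

lemma my_abs_sin_lt {t : ℝ} (ht : 0 < t) : |Real.sin t| < t := by
  rw [abs_lt]
  refine ⟨?_, Real.sin_lt ht⟩
  rcases le_or_gt t 1 with h | h
  · have hπ : t < π := lt_of_le_of_lt h (by linarith [Real.pi_gt_three])
    have := Real.sin_pos_of_pos_of_lt_pi ht hπ
    linarith
  · have := Real.neg_one_le_sin t
    linarith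

lemma my_abs_sin_lt_abs {t : ℝ} (ht : t ≠ 0) : |Real.sin t| < |t| := by
  rcases ht.lt_or_gt with h | h
  · have := my_abs_sin_lt (t := -t) (by linarith)
    rw [Real.sin_neg, abs_neg] at this
    rwa [abs_of_neg h]
  · rw [abs_of_pos h]; exact my_abs_sin_lt h

theorem exists_unique_chord_f (x : ℝ) (hx : x ∈ Set.Icc 0 π) :
    ∃! z : ℝ, z ∈ Set.Icc (0:ℝ) 2 ∧ z = 2 * Real.sin (x - z / 2) := by
  obtain ⟨hx0, hxπ⟩ := hx
  set f : ℝ → ℝ := fun z => 2 * Real.sin (x - z / 2) - z with hf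
  have hcont : ContinuousOn f (Set.Icc 0 2) := by
    apply Continuous.continuousOn
    continuity
  have hf0 : 0 ≤ f 0 := by
    have : 0 ≤ Real.sin x := Real.sin_nonneg_of_nonneg_of_le_pi hx0 hxπ
    simp [hf]; linarith
  have hf2 : f 2 ≤ 0 := by
    have : Real.sin (x - 1) ≤ 1 := Real.sin_le_one _
    simp [hf]; linarith
  have hmem : (0:ℝ) ∈ Set.Icc (f 2) (f 0) := ⟨hf2, hf0⟩
  obtain ⟨z, hz, hfz⟩ := intermediate_value_Icc' (by norm_num : (0:ℝ) ≤ 2) hcont hmem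
  refine ⟨z, ⟨hz, by simp [hf] at hfz; linarith⟩, ?_⟩
  rintro w ⟨hw, hweq⟩
  have hzeq : z = 2 * Real.sin (x - z / 2) := by simp [hf] at hfz; linarith
  by_contra hne
  have hd : w - z ≠ 0 := sub_ne_zero.mpr hne
  have key : w - z = 2 * (Real.sin (x - w / 2) - Real.sin (x - z / 2)) := by
    nth_rewrite 1 [hweq]; nth_rewrite 1 [hzeq]; ring
  rw [Real.sin_sub_sin] at key
  have harg : (x - w / 2 - (x - z / 2)) / 2 = (z - w) / 4 := by ring
  have hlt : |Real.sin ((z - w) / 4)| < |(z - w) / 4| :=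
    my_abs_sin_lt_abs (by intro h; apply hd; linarith [(div_eq_zero_iff.mp h)]; )
  have hcos : |Real.cos ((x - w / 2 + (x - z / 2)) / 2)| ≤ 1 := Real.abs_cos_le_one _
  have : |w - z| < |w - z| := by
    calc |w - z| = 4 * |Real.sin ((z-w)/4)| * |Real.cos ((x - w / 2 + (x - z / 2)) / 2)| := by
          rw [key, harg]
          rw [abs_mul, abs_mul, abs_mul]
          norm_num; ring
      _ ≤ 4 * |Real.sin ((z-w)/4)| := by
          nlinarith [abs_nonneg (Real.sin ((z-w)/4))]
      _ < 4 * |(z-w)/4| := by linarith [abs_nonneg (Real.sin ((z-w)/4))]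
      _ = |w - z| := by rw [abs_div, abs_sub_comm z w]; norm_num; ring
  exact absurd this (lt_irrefl _)
end

section
/- Define F(x) = x + f(x) on [0, π], where f(x) is the unique z ∈ [0, 2] with z = 2·sin(x − z/2). Then there exists x₀ ∈ (0, π) such that F is strictly increasing on [0, x₀] and strictly decreasing on [x₀, π]. -/
open Real

lemma aux_neg_one_lt_cos {t : ℝ} (ht : t ∈ Set.Ioo (0:ℝ) π) : -1 < Real.cos t := by
  rcases (Real.neg_one_le_cos t).lt_or_eq with h | h
  · exact h
  · exfalso
    have h1 : Real.cos t = Real.cos π := by rw [Real.cos_pi, ← h]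
    have h2 : t = π := Real.injOn_cos ⟨le_of_lt ht.1, le_of_lt ht.2⟩
      ⟨le_of_lt Real.pi_pos, le_refl _⟩ h1
    exact absurd h2 (ne_of_lt ht.2)

lemma aux_h_mono : StrictMonoOn (fun t => t + Real.sin t) (Set.Icc (0:ℝ) π) := by
  apply strictMonoOn_of_deriv_pos (convex_Icc 0 π)
  · fun_prop
  · intro t ht
    rw [interior_Icc] at ht
    have hd : deriv (fun t => t + Real.sin t) t = 1 + Real.cos t := by
      have := ((hasDerivAt_id t).add (Real.hasDerivAt_sin t)).deriv
      simpa using this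
    rw [hd]
    linarith [aux_neg_one_lt_cos ht]

noncomputable def g₀ : ℝ := Real.arccos (-(1/3))

lemma g0_mem : g₀ ∈ Set.Ioo (0:ℝ) π := by
  constructor
  · rw [g₀, Real.arccos_pos]; norm_num
  · rcases (Real.arccos_le_pi (-(1/3))).lt_or_eq with h | h
    · exact h
    · exfalso
      have h2 : Real.cos (Real.arccos (-(1/3))) = -1 := by rw [h, Real.cos_pi]
      rw [Real.cos_arccos (by norm_num) (by norm_num)] at h2
      norm_num at h2

lemma cos_g0 : Real.cos g₀ = -(1/3) := by
  rw [g₀, Real.cos_arccos] <;> norm_num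

lemma aux_phi_mono : StrictMonoOn (fun t => t + 3 * Real.sin t) (Set.Icc (0:ℝ) g₀) := by
  apply strictMonoOn_of_deriv_pos (convex_Icc 0 g₀)
  · fun_prop
  · intro t ht
    rw [interior_Icc] at ht
    have hd : deriv (fun t => t + 3 * Real.sin t) t = 1 + 3 * Real.cos t := by
      have := ((hasDerivAt_id t).add ((Real.hasDerivAt_sin t).const_mul 3)).deriv
      simpa using this
    rw [hd]
    have hc : Real.cos g₀ < Real.cos t := by
      apply Real.strictAntiOn_cos ⟨le_of_lt ht.1, le_of_lt (lt_of_lt_of_le ht.2 (le_of_lt g0_mem.2))⟩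
        ⟨le_of_lt g0_mem.1, le_of_lt g0_mem.2⟩ ht.2
    rw [cos_g0] at hc
    linarith

lemma aux_phi_anti : StrictAntiOn (fun t => t + 3 * Real.sin t) (Set.Icc g₀ π) := by
  apply strictAntiOn_of_deriv_neg (convex_Icc g₀ π)
  · fun_prop
  · intro t ht
    rw [interior_Icc] at ht
    have hd : deriv (fun t => t + 3 * Real.sin t) t = 1 + 3 * Real.cos t := by
      have := ((hasDerivAt_id t).add ((Real.hasDerivAt_sin t).const_mul 3)).deriv
      simpa using this
    rw [hd]
    have hc : Real.cos t < Real.cos g₀ := by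
      apply Real.strictAntiOn_cos ⟨le_of_lt g0_mem.1, le_of_lt g0_mem.2⟩
        ⟨le_of_lt (lt_of_le_of_lt (le_of_lt g0_mem.1) ht.1), le_of_lt ht.2⟩ ht.1
    rw [cos_g0] at hc
    linarith

theorem F_unimodal (f : ℝ → ℝ)
    (hf : ∀ x ∈ Set.Icc (0:ℝ) π, f x ∈ Set.Icc (0:ℝ) 2 ∧ f x = 2 * Real.sin (x - f x / 2))
    (huniq : ∀ x ∈ Set.Icc (0:ℝ) π, ∀ z ∈ Set.Icc (0:ℝ) 2,
      z = 2 * Real.sin (x - z / 2) → z = f x) :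
    ∃ x₀ ∈ Set.Ioo (0:ℝ) π,
      StrictMonoOn (fun x => x + f x) (Set.Icc 0 x₀) ∧
      StrictAntiOn (fun x => x + f x) (Set.Icc x₀ π) := by
  set g : ℝ → ℝ := fun x => x - f x / 2 with hg
  -- basic facts about g on [0, π]
  have hgmem : ∀ x ∈ Set.Icc (0:ℝ) π, g x ∈ Set.Icc (0:ℝ) π := by
    intro x hx
    obtain ⟨⟨hf0, hf2⟩, hfe⟩ := hf x hx
    constructor
    · by_contra hneg
      push_neg at hneg
      have h1 : -π < g x := by
        have : (1:ℝ) < π := by linarith [Real.pi_gt_three]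
        simp only [hg]
        have := hx.1
        nlinarith
      have h2 : Real.sin (g x) < 0 := Real.sin_neg_of_neg_of_neg_pi_lt hneg h1
      rw [hfe] at hf0
      simp only [hg] at h2
      nlinarith
    · have := hx.2
      simp only [hg]
      linarith
  have hxeq : ∀ x ∈ Set.Icc (0:ℝ) π, g x + Real.sin (g x) = x := by
    intro x hx
    obtain ⟨_, hfe⟩ := hf x hx
    simp only [hg]
    nlinarith [hfe]
  have hFeq : ∀ x ∈ Set.Icc (0:ℝ) π, x + f x = g x + 3 * Real.sin (g x) := by
    intro x hx
    obtain ⟨_, hfe⟩ := hf x hx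
    simp only [hg]
    nlinarith [hfe]
  set x₀ : ℝ := g₀ + Real.sin g₀ with hx0
  have hg0Icc : g₀ ∈ Set.Icc (0:ℝ) π := ⟨le_of_lt g0_mem.1, le_of_lt g0_mem.2⟩
  have h0Icc : (0:ℝ) ∈ Set.Icc (0:ℝ) π := ⟨le_refl _, le_of_lt Real.pi_pos⟩
  have hpiIcc : π ∈ Set.Icc (0:ℝ) π := ⟨le_of_lt Real.pi_pos, le_refl _⟩
  have hx0mem : x₀ ∈ Set.Ioo (0:ℝ) π := by
    constructor
    · have := aux_h_mono h0Icc hg0Icc g0_mem.1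
      simpa [hx0] using this
    · have := aux_h_mono hg0Icc hpiIcc g0_mem.2
      simpa [hx0, Real.sin_pi] using this
  -- order transfer: for x, y in [0, π], x < y ↔ g x < g y, etc.
  have hglt : ∀ x ∈ Set.Icc (0:ℝ) π, ∀ y ∈ Set.Icc (0:ℝ) π, x < y → g x < g y := by
    intro x hx y hy hxy
    by_contra hle
    push_neg at hle
    rcases hle.lt_or_eq with h | h
    · have := aux_h_mono (hgmem y hy) (hgmem x hx) h
      simp only at this
      rw [hxeq x hx, hxeq y hy] at this
      linarith
    · have : y = x := by rw [← hxeq x hx, ← hxeq y hy, h]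
      linarith
  have hgle : ∀ x ∈ Set.Icc (0:ℝ) π, x ≤ x₀ → g x ≤ g₀ := by
    intro x hx hle
    by_contra hlt
    push_neg at hlt
    have := aux_h_mono hg0Icc (hgmem x hx) hlt
    simp only at this
    rw [hxeq x hx] at this
    simp only [hx0] at hle
    linarith
  have hgge : ∀ x ∈ Set.Icc (0:ℝ) π, x₀ ≤ x → g₀ ≤ g x := by
    intro x hx hle
    by_contra hlt
    push_neg at hlt
    have := aux_h_mono (hgmem x hx) hg0Icc hlt
    simp only at this
    rw [hxeq x hx] at this
    simp only [hx0] at hle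
    linarith
  refine ⟨x₀, hx0mem, ?_, ?_⟩
  · intro x hx y hy hxy
    have hx' : x ∈ Set.Icc (0:ℝ) π := ⟨hx.1, le_trans hx.2 (le_of_lt hx0mem.2)⟩
    have hy' : y ∈ Set.Icc (0:ℝ) π := ⟨hy.1, le_trans hy.2 (le_of_lt hx0mem.2)⟩
    have h1 : g x < g y := hglt x hx' y hy' hxy
    have h2 : g x ∈ Set.Icc (0:ℝ) g₀ := ⟨(hgmem x hx').1, hgle x hx' hx.2⟩
    have h3 : g y ∈ Set.Icc (0:ℝ) g₀ := ⟨(hgmem y hy').1, hgle y hy' hy.2⟩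
    have := aux_phi_mono h2 h3 h1
    show x + f x < y + f y
    rw [hFeq x hx', hFeq y hy']
    exact this
  · intro x hx y hy hxy
    have hx' : x ∈ Set.Icc (0:ℝ) π := ⟨le_trans (le_of_lt hx0mem.1) hx.1, hx.2⟩
    have hy' : y ∈ Set.Icc (0:ℝ) π := ⟨le_trans (le_of_lt hx0mem.1) hy.1, hy.2⟩
    have h1 : g x < g y := hglt x hx' y hy' hxy
    have h2 : g x ∈ Set.Icc g₀ π := ⟨hgge x hx' hx.1, (hgmem x hx').2⟩
    have h3 : g y ∈ Set.Icc g₀ π := ⟨hgge y hy' hy.1, (hgmem y hy').2⟩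
    have := aux_phi_anti h2 h3 h1
    show y + f y < x + f x
    rw [hFeq x hx', hFeq y hy']
    exact this
end

section
/- Let x₀ ∈ [0, π] and f(x₀) ∈ [0, 2] satisfy f(x₀) = 2·sin(x₀ − f(x₀)/2), with x₀ ≈ 2.85344. Then for all x ∈ [0, π], x + f(x) ≤ 1 + x₀ + f(x₀) < 5.740, where f(x) is the unique z ∈ [0, 2] with z = 2·sin(x − z/2). -/
open Real

lemma deriv_nonneg_imp (f f' : ℝ → ℝ) (hder : ∀ y, HasDerivAt f (f' y) y)
    (hpos : ∀ y, 0 ≤ y → 0 ≤ f' y) {x : ℝ} (hx : 0 ≤ x) : f 0 ≤ f x := by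
  have hmono : MonotoneOn f (Set.Ici 0) := by
    apply monotoneOn_of_deriv_nonneg (convex_Ici 0)
    · exact (continuous_iff_continuousAt.2 fun y => (hder y).continuousAt).continuousOn
    · intro y _
      exact (hder y).differentiableAt.differentiableWithinAt
    · intro y hy
      rw [interior_Ici] at hy
      rw [(hder y).deriv]
      exact hpos y hy.le
  exact hmono Set.self_mem_Ici hx hx

lemma T1 {x : ℝ} (hx : 0 ≤ x) : x - x^3/6 ≤ Real.sin x := by
  have hder : ∀ y : ℝ, HasDerivAt (fun y => Real.sin y - (y - y^3/6))
      (Real.cos y - (1 - y^2/2)) y := by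
    intro y
    have h2 : HasDerivAt (fun y : ℝ => y - y^3/6) (1 - y^2/2) y := by
      have h := (hasDerivAt_id y).sub ((hasDerivAt_pow 3 y).div_const 6)
      refine h.congr_deriv ?_
      push_cast; ring
    exact (Real.hasDerivAt_sin y).sub h2
  have h := deriv_nonneg_imp _ _ hder
    (fun y _ => by nlinarith [Real.one_sub_sq_div_two_le_cos (x := y)]) hx
  simp only [Real.sin_zero] at h
  nlinarith [h]

lemma T2 {x : ℝ} (hx : 0 ≤ x) : Real.cos x ≤ 1 - x^2/2 + x^4/24 := by
  have hder : ∀ y : ℝ, HasDerivAt (fun y => 1 - y^2/2 + y^4/24 - Real.cos y)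
      (-(y - y^3/6) + Real.sin y) y := by
    intro y
    have h2 : HasDerivAt (fun y : ℝ => 1 - y^2/2 + y^4/24) (-(y - y^3/6)) y := by
      have h := (((hasDerivAt_const y (1:ℝ)).sub ((hasDerivAt_pow 2 y).div_const 2)).add
        ((hasDerivAt_pow 4 y).div_const 24))
      refine h.congr_deriv ?_
      push_cast; ring
    have h3 := h2.sub (Real.hasDerivAt_cos y)
    refine h3.congr_deriv ?_
    ring
  have h := deriv_nonneg_imp _ _ hder
    (fun y hy => by nlinarith [T1 hy]) hx
  simp only [Real.cos_zero] at h
  nlinarith [h]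

lemma T3 {x : ℝ} (hx : 0 ≤ x) : Real.sin x ≤ x - x^3/6 + x^5/120 := by
  have hder : ∀ y : ℝ, HasDerivAt (fun y => y - y^3/6 + y^5/120 - Real.sin y)
      ((1 - y^2/2 + y^4/24) - Real.cos y) y := by
    intro y
    have h2 : HasDerivAt (fun y : ℝ => y - y^3/6 + y^5/120) (1 - y^2/2 + y^4/24) y := by
      have h := (((hasDerivAt_id y).sub ((hasDerivAt_pow 3 y).div_const 6)).add
        ((hasDerivAt_pow 5 y).div_const 120))
      refine h.congr_deriv ?_
      push_cast; ring
    exact h2.sub (Real.hasDerivAt_sin y)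
  have h := deriv_nonneg_imp _ _ hder
    (fun y hy => by nlinarith [T2 hy]) hx
  simp only [Real.sin_zero] at h
  nlinarith [h]

lemma T4 {x : ℝ} (hx : 0 ≤ x) : 1 - x^2/2 + x^4/24 - x^6/720 ≤ Real.cos x := by
  have hder : ∀ y : ℝ, HasDerivAt (fun y => Real.cos y - (1 - y^2/2 + y^4/24 - y^6/720))
      (-Real.sin y - (-(y - y^3/6 + y^5/120))) y := by
    intro y
    have h2 : HasDerivAt (fun y : ℝ => 1 - y^2/2 + y^4/24 - y^6/720)
        (-(y - y^3/6 + y^5/120)) y := by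
      have h := ((((hasDerivAt_const y (1:ℝ)).sub ((hasDerivAt_pow 2 y).div_const 2)).add
        ((hasDerivAt_pow 4 y).div_const 24)).sub ((hasDerivAt_pow 6 y).div_const 720))
      refine h.congr_deriv ?_
      push_cast; ring
    exact (Real.hasDerivAt_cos y).sub h2
  have h := deriv_nonneg_imp _ _ hder
    (fun y hy => by nlinarith [T3 hy]) hx
  simp only [Real.cos_zero] at h
  nlinarith [h]

lemma T5 {x : ℝ} (hx : 0 ≤ x) : x - x^3/6 + x^5/120 - x^7/5040 ≤ Real.sin x := by
  have hder : ∀ y : ℝ, HasDerivAt (fun y => Real.sin y - (y - y^3/6 + y^5/120 - y^7/5040))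
      (Real.cos y - (1 - y^2/2 + y^4/24 - y^6/720)) y := by
    intro y
    have h2 : HasDerivAt (fun y : ℝ => y - y^3/6 + y^5/120 - y^7/5040)
        (1 - y^2/2 + y^4/24 - y^6/720) y := by
      have h := ((((hasDerivAt_id y).sub ((hasDerivAt_pow 3 y).div_const 6)).add
        ((hasDerivAt_pow 5 y).div_const 120)).sub ((hasDerivAt_pow 7 y).div_const 5040))
      refine h.congr_deriv ?_
      push_cast; ring
    exact (Real.hasDerivAt_sin y).sub h2
  have h := deriv_nonneg_imp _ _ hder
    (fun y hy => by nlinarith [T4 hy]) hx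
  simp only [Real.sin_zero] at h
  nlinarith [h]

lemma T6 {x : ℝ} (hx : 0 ≤ x) : Real.cos x ≤ 1 - x^2/2 + x^4/24 - x^6/720 + x^8/40320 := by
  have hder : ∀ y : ℝ, HasDerivAt
      (fun y => 1 - y^2/2 + y^4/24 - y^6/720 + y^8/40320 - Real.cos y)
      (-(y - y^3/6 + y^5/120 - y^7/5040) + Real.sin y) y := by
    intro y
    have h2 : HasDerivAt (fun y : ℝ => 1 - y^2/2 + y^4/24 - y^6/720 + y^8/40320)
        (-(y - y^3/6 + y^5/120 - y^7/5040)) y := by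
      have h := (((((hasDerivAt_const y (1:ℝ)).sub ((hasDerivAt_pow 2 y).div_const 2)).add
        ((hasDerivAt_pow 4 y).div_const 24)).sub ((hasDerivAt_pow 6 y).div_const 720)).add
        ((hasDerivAt_pow 8 y).div_const 40320))
      refine h.congr_deriv ?_
      push_cast; ring
    have h3 := h2.sub (Real.hasDerivAt_cos y)
    refine h3.congr_deriv ?_
    ring
  have h := deriv_nonneg_imp _ _ hder
    (fun y hy => by nlinarith [T5 hy]) hx
  simp only [Real.cos_zero] at h
  nlinarith [h]

lemma T7 {x : ℝ} (hx : 0 ≤ x) :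
    Real.sin x ≤ x - x^3/6 + x^5/120 - x^7/5040 + x^9/362880 := by
  have hder : ∀ y : ℝ, HasDerivAt
      (fun y => y - y^3/6 + y^5/120 - y^7/5040 + y^9/362880 - Real.sin y)
      ((1 - y^2/2 + y^4/24 - y^6/720 + y^8/40320) - Real.cos y) y := by
    intro y
    have h2 : HasDerivAt (fun y : ℝ => y - y^3/6 + y^5/120 - y^7/5040 + y^9/362880)
        (1 - y^2/2 + y^4/24 - y^6/720 + y^8/40320) y := by
      have h := (((((hasDerivAt_id y).sub ((hasDerivAt_pow 3 y).div_const 6)).add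
        ((hasDerivAt_pow 5 y).div_const 120)).sub ((hasDerivAt_pow 7 y).div_const 5040)).add
        ((hasDerivAt_pow 9 y).div_const 362880))
      refine h.congr_deriv ?_
      push_cast; ring
    exact h2.sub (Real.hasDerivAt_sin y)
  have h := deriv_nonneg_imp _ _ hder
    (fun y hy => by nlinarith [T6 hy]) hx
  simp only [Real.sin_zero] at h
  nlinarith [h]

lemma abs_sin_sub_le (d : ℝ) : |Real.sin d - d| ≤ |d|^3/6 := by
  rcases le_total 0 d with h | h
  · rw [abs_of_nonneg h]
    rw [abs_le]
    constructor
    · nlinarith [T1 h]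
    · nlinarith [Real.sin_le h, pow_nonneg h 3]
  · have h' : 0 ≤ -d := by linarith
    rw [abs_of_nonpos h]
    rw [abs_le]
    constructor
    · nlinarith [Real.le_sin h, pow_nonneg h' 3]
    · have := T1 h'
      rw [Real.sin_neg] at this
      nlinarith [this]

lemma sinMono (x₀ a b : ℝ) (hab : a ≤ b) :
    a - 2 * Real.sin (x₀ - a/2) ≤ b - 2 * Real.sin (x₀ - b/2) := by
  have h : ∀ u v : ℝ, |Real.sin u - Real.sin v| ≤ |u - v| := by
    intro u v
    rw [Real.sin_sub_sin]
    calc |2 * Real.sin ((u - v)/2) * Real.cos ((u + v)/2)|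
        = 2 * |Real.sin ((u - v)/2)| * |Real.cos ((u + v)/2)| := by
          rw [abs_mul, abs_mul]; norm_num
      _ ≤ 2 * |(u - v)/2| * 1 := by
          apply mul_le_mul (by nlinarith [Real.abs_sin_le_abs (x := (u - v)/2)])
            (Real.abs_cos_le_one _) (abs_nonneg _)
            (by positivity)
      _ = |u - v| := by
          rw [abs_div, abs_of_pos (show (0:ℝ) < 2 by norm_num)]
          ring
  have h := h (x₀ - b/2) (x₀ - a/2)
  have h2 : |(x₀ - b/2) - (x₀ - a/2)| = (b - a)/2 := by
    rw [show (x₀ - b/2) - (x₀ - a/2) = -((b - a)/2) by ring, abs_neg,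
      abs_of_nonneg (by linarith)]
  rw [h2] at h
  have h3 := (abs_le.1 h).2
  linarith

set_option maxHeartbeats 1000000 in
theorem algoA_upper_bound (f : ℝ → ℝ)
    (hf : ∀ x ∈ Set.Icc (0:ℝ) π, f x ∈ Set.Icc (0:ℝ) 2 ∧ f x = 2 * Real.sin (x - f x / 2))
    (x₀ : ℝ) (hx₀ : x₀ ∈ Set.Icc (0:ℝ) π)
    (hx₀approx : |x₀ - 2.85344| ≤ 0.001)
    (hfx₀ : f x₀ ∈ Set.Icc (0:ℝ) 2)
    (heq : f x₀ = 2 * Real.sin (x₀ - f x₀ / 2)) :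
    (∀ x ∈ Set.Icc (0:ℝ) π, x + f x ≤ 1 + x₀ + f x₀) ∧ 1 + x₀ + f x₀ < 5.740 := by
  obtain ⟨ha1, ha2⟩ := abs_le.1 hx₀approx
  have hπL := Real.pi_gt_d6
  have hπU := Real.pi_lt_d6
  have h0 : f x₀ - 2 * Real.sin (x₀ - f x₀ / 2) = 0 := by linarith [heq]
  -- Lower bound: f x₀ ≥ π + 1 - x₀
  have hlow : π + 1 - x₀ ≤ f x₀ := by
    by_contra hcon
    push_neg at hcon
    have hm := sinMono x₀ (f x₀) (π + 1 - x₀) hcon.le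
    obtain ⟨w, hw⟩ : ∃ w : ℝ, w = π - (x₀ - (π + 1 - x₀)/2) := ⟨_, rfl⟩
    have hsinw : Real.sin (x₀ - (π + 1 - x₀)/2) = Real.sin w := by
      rw [hw, Real.sin_pi_sub]
    have hw1 : 0.93 ≤ w := by rw [hw]; linarith
    have hw2 : w ≤ 0.9338 := by rw [hw]; linarith
    have hw0 : (0:ℝ) ≤ w := by linarith
    have pw : w^3 ≤ (0.9338:ℝ)^3 := pow_le_pow_left₀ hw0 hw2 3
    norm_num at pw
    have hsw : (0.794:ℝ) ≤ Real.sin w := by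
      have := T1 hw0
      linarith
    rw [hsinw] at hm
    linarith
  -- Upper bound: f x₀ < 4.740 - x₀
  have hup : f x₀ < 4.740 - x₀ := by
    by_contra hcon
    push_neg at hcon
    have hm := sinMono x₀ (4.740 - x₀) (f x₀) hcon
    have hpos : 0 < (4.740 - x₀) - 2 * Real.sin (x₀ - (4.740 - x₀)/2) := by
      obtain ⟨v, hv⟩ : ∃ v : ℝ, v = π - 1.91016 := ⟨_, rfl⟩
      obtain ⟨d, hdd⟩ : ∃ d : ℝ, d = 1.5 * x₀ - 4.28016 := ⟨_, rfl⟩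
      have hθ : x₀ - (4.740 - x₀)/2 = (π - v) + d := by rw [hv, hdd]; ring
      have hsin : Real.sin (x₀ - (4.740 - x₀)/2)
          = Real.sin v * Real.cos d - Real.cos v * Real.sin d := by
        rw [hθ, Real.sin_add, Real.sin_pi_sub, Real.cos_pi_sub]; ring
      have hv1 : (1.231432:ℝ) ≤ v := by rw [hv]; linarith
      have hv2 : v ≤ 1.231433 := by rw [hv]; linarith
      have hv0 : (0:ℝ) ≤ v := by linarith
      have hvπ : v ≤ π := by rw [hv]; linarith
      have p2L : (1.231432:ℝ)^2 ≤ v^2 := pow_le_pow_left₀ (by norm_num) hv1 2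
      have p2U : v^2 ≤ (1.231433:ℝ)^2 := pow_le_pow_left₀ hv0 hv2 2
      have p3L : (1.231432:ℝ)^3 ≤ v^3 := pow_le_pow_left₀ (by norm_num) hv1 3
      have p4L : (1.231432:ℝ)^4 ≤ v^4 := pow_le_pow_left₀ (by norm_num) hv1 4
      have p4U : v^4 ≤ (1.231433:ℝ)^4 := pow_le_pow_left₀ hv0 hv2 4
      have p5U : v^5 ≤ (1.231433:ℝ)^5 := pow_le_pow_left₀ hv0 hv2 5
      have p6U : v^6 ≤ (1.231433:ℝ)^6 := pow_le_pow_left₀ hv0 hv2 6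
      have p7L : (1.231432:ℝ)^7 ≤ v^7 := pow_le_pow_left₀ (by norm_num) hv1 7
      have p9U : v^9 ≤ (1.231433:ℝ)^9 := pow_le_pow_left₀ hv0 hv2 9
      norm_num at p2L p2U p3L p4L p4U p5U p6U p7L p9U
      have hsvU : Real.sin v ≤ 0.942968 := by
        have := T7 hv0
        linarith
      have hsv0 : (0:ℝ) ≤ Real.sin v := Real.sin_nonneg_of_nonneg_of_le_pi hv0 hvπ
      have hcvL : (0.33275:ℝ) ≤ Real.cos v := by
        have := T4 hv0
        linarith
      have hcvU : Real.cos v ≤ 0.33761 := by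
        have := T2 hv0
        linarith
      have hcv0 : (0:ℝ) ≤ Real.cos v := by linarith
      have hd1 : -0.0015 ≤ d := by rw [hdd]; linarith
      have hd2 : d ≤ 0.0015 := by rw [hdd]; linarith
      have habsd : |d| ≤ 0.0015 := abs_le.2 ⟨hd1, hd2⟩
      have hd3 : |d|^3 ≤ (0.0015:ℝ)^3 := pow_le_pow_left₀ (abs_nonneg d) habsd 3
      norm_num at hd3
      have hsd := abs_le.1 (abs_sin_sub_le d)
      have hs1 : d - 0.000000001 ≤ Real.sin d := by
        have := hsd.1
        linarith
      have hA : Real.sin v * Real.cos d ≤ Real.sin v :=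
        mul_le_of_le_one_right hsv0 (Real.cos_le_one d)
      have hB0 := mul_le_mul_of_nonneg_left hs1 hcv0
      have hB : Real.cos v * d - 0.000000001 ≤ Real.cos v * Real.sin d := by
        nlinarith [Real.cos_le_one v]
      have p2 : 0 ≤ (Real.cos v - 0.33275) * (0.0015 + d) :=
        mul_nonneg (by linarith) (by linarith)
      rw [hsin]
      nlinarith [hA, hB, p2]
    linarith
  refine ⟨fun x hx => ?_, by linarith⟩
  have h2 := (hf x hx).1.2
  have hxπ := hx.2
  linarith
end
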